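/- Let F be a field of characteristic ≠ 2, L/F a quadratic field extension with nontrivial F-automorphism ι, and (V,ψ) a finite-dimensional quadratic space over L. Let s denote the ι-semilinear automorphism of C(ψ ⊥ ^ιψ) of order 2 extending the switch (v,w) ↦ (w,v). The F-subspace of s-fixed vectors of V ⊕ ^ιV is {(v,v) : v ∈ V}, and the restriction of ψ ⊥ ^ιψ to it, namely v ↦ Tr_{L/F}(ψ(v)), is the transfer tr_*(ψ). The natural embedding of this fixed quadratic space into C(ψ ⊥ ^ιψ) induces an isomorphism of F-algebras from C(tr_*(ψ)) onto the F-subalgebra (C(ψ ⊥ ^ιψ))^s of s-fixed elements, which preserves the even/odd grading and intertwines the canonical involutions. -/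

import Mathlib

section Conj
variable {F L : Type} [Field F] [Field L] [Algebra F L]

/-- The conjugate of an `L`-module along a ring automorphism `ιL` of `L`: the same additive
group with the scalar action twisted by `ιL`. -/
def Conj (ιL : L ≃ₐ[F] L) (V : Type) : Type := V

instance Conj.addCommGroup (ιL : L ≃ₐ[F] L) (V : Type) [AddCommGroup V] :
    AddCommGroup (Conj ιL V) := inferInstanceAs (AddCommGroup V)

instance Conj.module (ιL : L ≃ₐ[F] L) (V : Type) [AddCommGroup V] [Module L V] :
    Module L (Conj ιL V) := Module.compHom V (ιL.toRingEquiv.toRingHom)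

/-- The identity map, viewed as a map into the conjugate module. -/
def toConj (ιL : L ≃ₐ[F] L) (V : Type) : V → Conj ιL V := fun v => v

/-- The identity map, viewed as a map out of the conjugate module. -/
def ofConj (ιL : L ≃ₐ[F] L) (V : Type) : Conj ιL V → V := fun v => v

lemma Conj.smul_def (ιL : L ≃ₐ[F] L) (V : Type) [AddCommGroup V] [Module L V]
    (c : L) (v : Conj ιL V) : c • v = toConj ιL V (ιL c • ofConj ιL V v) := rfl

variable (ιL : L ≃ₐ[F] L) (V : Type) [AddCommGroup V] [Module L V]

/-- The conjugate quadratic form `^ιψ` on the conjugate module. -/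
noncomputable def conjForm (hι : Function.Involutive ιL) (ψ : QuadraticForm L V) :
    QuadraticForm L (Conj ιL V) where
  toFun v := ιL (ψ (ofConj ιL V v))
  toFun_smul a v := by
    try dsimp only
    rw [Conj.smul_def]
    show ιL (ψ (ιL a • ofConj ιL V v)) = (a * a) • ιL (ψ (ofConj ιL V v))
    rw [QuadraticMap.map_smul, smul_eq_mul, map_mul, map_mul, hι a, smul_eq_mul]
  exists_companion' := by
    obtain ⟨B, hB⟩ := ψ.exists_companion
    refine ⟨LinearMap.mk₂ L
      (fun x y => ιL (B (ofConj ιL V x) (ofConj ιL V y))) ?_ ?_ ?_ ?_, ?_⟩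
    · intro x x' y
      show ιL (B (ofConj ιL V x + ofConj ιL V x') (ofConj ιL V y)) = _
      rw [map_add, LinearMap.add_apply, map_add]
    · intro a x y
      show ιL (B (ιL a • ofConj ιL V x) (ofConj ιL V y)) = a * ιL (B (ofConj ιL V x) (ofConj ιL V y))
      rw [map_smul, LinearMap.smul_apply, smul_eq_mul, map_mul, hι a]
    · intro x y y'
      show ιL (B (ofConj ιL V x) (ofConj ιL V y + ofConj ιL V y')) = _
      rw [map_add, map_add]
    · intro a x y
      show ιL (B (ofConj ιL V x) (ιL a • ofConj ιL V y)) = a * ιL (B (ofConj ιL V x) (ofConj ιL V y))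
      rw [map_smul, smul_eq_mul, map_mul, hι a]
    · intro x y
      show ιL (ψ (ofConj ιL V x + ofConj ιL V y)) = _
      rw [hB, map_add, map_add]
      rfl
end Conj
section transfer
variable (F L : Type) [Field F] [Field L] [Algebra F L]
variable (V : Type) [AddCommGroup V] [Module L V] [Module F V] [IsScalarTower F L V]

/-- The transfer (Scharlau transfer along the trace map `Tr_{L/F}`) of a quadratic form. -/
noncomputable def transferForm (ψ : QuadraticForm L V) : QuadraticForm F V where
  toFun v := Algebra.trace F L (ψ v)
  toFun_smul a v := by
    try dsimp only
    rw [← algebraMap_smul L a v, QuadraticMap.map_smul, smul_eq_mul, ← map_mul,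
      ← Algebra.smul_def, map_smul]
  exists_companion' := by
    obtain ⟨B, hB⟩ := ψ.exists_companion
    refine ⟨LinearMap.mk₂ F (fun x y => Algebra.trace F L (B x y)) ?_ ?_ ?_ ?_, ?_⟩
    · intro x x' y; (try dsimp only); rw [map_add, LinearMap.add_apply, map_add]
    · intro a x y; try dsimp only
      rw [← algebraMap_smul L a x, map_smul, LinearMap.smul_apply, algebraMap_smul L a, map_smul]
    · intro x y y'; (try dsimp only); rw [map_add, map_add]
    · intro a x y; try dsimp only
      rw [← algebraMap_smul L a y, map_smul, algebraMap_smul L a, map_smul]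
    · intro x y
      simp only [LinearMap.mk₂_apply, hB, map_add]
end transfer

section AuxConj
open scoped TensorProduct
variable {F L : Type} [Field F] [Field L] [Algebra F L]
variable (ιL : L ≃ₐ[F] L) (V : Type) [AddCommGroup V] [Module L V] [Module F V]
  [IsScalarTower F L V]

@[simp] lemma toConj_add (v w : V) :
    toConj ιL V (v + w) = toConj ιL V v + toConj ιL V w := rfl
@[simp] lemma toConj_zero : toConj ιL V 0 = 0 := rfl
@[simp] lemma ofConj_add (v w : Conj ιL V) :
    ofConj ιL V (v + w) = ofConj ιL V v + ofConj ιL V w := rfl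
@[simp] lemma ofConj_toConj (v : V) : ofConj ιL V (toConj ιL V v) = v := rfl
@[simp] lemma toConj_ofConj (v : Conj ιL V) : toConj ιL V (ofConj ιL V v) = v := rfl
@[simp] lemma smul_toConj (c : L) (v : V) :
    c • toConj ιL V v = toConj ιL V (ιL c • v) := rfl

instance Conj.moduleF : Module F (Conj ιL V) := inferInstanceAs (Module F V)

@[simp] lemma smulF_toConj (a : F) (v : V) :
    a • toConj ιL V v = toConj ιL V (a • v) := rfl

instance Conj.isScalarTower : IsScalarTower F L (Conj ιL V) := by
  constructor
  intro a c v
  show toConj ιL V (ιL (a • c) • ofConj ιL V v) = a • toConj ιL V (ιL c • ofConj ιL V v)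
  rw [smulF_toConj, Algebra.smul_def, map_mul, AlgEquiv.commutes, ← Algebra.smul_def, smul_assoc]

/-- The `F`-bilinear "diagonal" pairing used to identify `L ⊗[F] V` with `V × ^ιV`. -/
noncomputable def diagBil : L →ₗ[L] V →ₗ[F] V × Conj ιL V where
  toFun c :=
    { toFun := fun v => (c • v, toConj ιL V (ιL c • v))
      map_add' := fun v w => by simp [smul_add, Prod.ext_iff]
      map_smul' := fun a v => by
        simp [Prod.ext_iff, smul_comm a c v, smul_comm a (ιL c) v] }
  map_add' c d := by
    ext v
    · simp [add_smul]
    · simp [add_smul]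
  map_smul' d c := by
    ext v
    · simp [mul_smul]
    · simp [mul_smul]

@[simp] lemma diagBil_apply (c : L) (v : V) :
    diagBil ιL V c v = (c • v, toConj ιL V (ιL c • v)) := rfl

/-- The natural `L`-linear map `L ⊗[F] V → V × ^ιV`. -/
noncomputable def diagTensor : L ⊗[F] V →ₗ[L] V × Conj ιL V :=
  TensorProduct.AlgebraTensorModule.lift (diagBil ιL V)

@[simp] lemma diagTensor_tmul (c : L) (v : V) :
    diagTensor ιL V (c ⊗ₜ[F] v) = (c • v, toConj ιL V (ιL c • v)) := rfl

end AuxConj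

open scoped TensorProduct in
/-- The fixed points of the switch on `V ⊕ ^ιV` form the diagonal copy of `V`, the restriction
of `ψ ⊥ ^ιψ` to it is the transfer `tr⋆(ψ)`, and the natural embedding induces an isomorphism
of `C(tr⋆(ψ))` onto the `F`-subalgebra of fixed points of the switch automorphism of
`C(ψ ⊥ ^ιψ)`, compatible with the gradings and the canonical involutions. -/
theorem clifford_of_transfer_is_fixed_points
    (F L : Type) [Field F] [Field L] [Algebra F L]
    (hF : (2:F) ≠ 0) (hquad : Module.finrank F L = 2)
    (ιL : L ≃ₐ[F] L) (hnontriv : ιL ≠ AlgEquiv.refl) (hι : Function.Involutive ιL)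
    (V : Type) [AddCommGroup V] [Module L V] [Module F V] [IsScalarTower F L V]
    [FiniteDimensional L V]
    (ψ : QuadraticForm L V) :
    -- the fixed points of the switch on `V ⊕ ^ιV` form the diagonal
    (∀ p : V × Conj ιL V, (ofConj ιL V p.2, toConj ιL V p.1) = p ↔
      ∃ v : V, p = (v, toConj ιL V v)) ∧
    -- the restriction of `ψ ⊥ ^ιψ` to the diagonal is the transfer `v ↦ Tr_{L/F}(ψ(v))`
    (∀ v : V, (ψ.prod (conjForm ιL V hι ψ)) (v, toConj ιL V v) =
      algebraMap F L (transferForm F L V ψ v)) ∧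
    -- and for the (unique) semilinear automorphism `S` extending the switch:
    ∀ S : CliffordAlgebra (ψ.prod (conjForm ιL V hι ψ)) ≃+*
        CliffordAlgebra (ψ.prod (conjForm ιL V hι ψ)),
      (∀ (c : L) (x : CliffordAlgebra (ψ.prod (conjForm ιL V hι ψ))),
        S (c • x) = ιL c • S x) →
      (∀ p : V × Conj ιL V,
        S (CliffordAlgebra.ι (ψ.prod (conjForm ιL V hι ψ)) p) =
          CliffordAlgebra.ι (ψ.prod (conjForm ιL V hι ψ)) (ofConj ιL V p.2, toConj ιL V p.1)) →
      ∃ Φ : CliffordAlgebra (transferForm F L V ψ) →+*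
          CliffordAlgebra (ψ.prod (conjForm ιL V hι ψ)),
        -- F-algebra homomorphism (F-linear ring homomorphism)
        (∀ (a : F) (x : CliffordAlgebra (transferForm F L V ψ)),
          Φ (a • x) = algebraMap F L a • Φ x) ∧
        -- injective, i.e. an isomorphism onto its image, ...
        Function.Injective Φ ∧
        -- ... which is exactly the set of `S`-fixed points
        (∀ y : CliffordAlgebra (ψ.prod (conjForm ιL V hι ψ)),
          S y = y ↔ y ∈ Set.range Φ) ∧
        -- induced by the natural embedding of the diagonal quadratic space
        (∀ v : V, Φ (CliffordAlgebra.ι (transferForm F L V ψ) v) =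
          CliffordAlgebra.ι (ψ.prod (conjForm ιL V hι ψ)) (v, toConj ιL V v)) ∧
        -- preserves the even/odd grading
        (∀ (i : ZMod 2) (x : CliffordAlgebra (transferForm F L V ψ)),
          x ∈ CliffordAlgebra.evenOdd (transferForm F L V ψ) i →
            Φ x ∈ CliffordAlgebra.evenOdd (ψ.prod (conjForm ιL V hι ψ)) i) ∧
        -- intertwines the canonical involutions
        (∀ x : CliffordAlgebra (transferForm F L V ψ),
          Φ (CliffordAlgebra.reverse (Q := transferForm F L V ψ) x) =
            CliffordAlgebra.reverse (Q := ψ.prod (conjForm ιL V hι ψ)) (Φ x)) := by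
  classical
  have halg : Function.Injective (algebraMap F L) := (algebraMap F L).injective
  have h2L : (2 : L) ≠ 0 := by
    intro h
    apply hF
    apply halg
    rw [map_ofNat, h, map_zero]
  letI : Invertible (2 : F) := invertibleOfNonzero hF
  letI : Invertible (2 : L) := invertibleOfNonzero h2L
  haveI : FiniteDimensional F L := Module.finite_of_finrank_pos (by rw [hquad]; norm_num)
  letI : Fintype (L ≃ₐ[F] L) := AlgEquiv.fintype F L
  haveI : Algebra.IsAlgebraic F L := Algebra.IsAlgebraic.of_finite F L
  have hcard : Fintype.card (L ≃ₐ[F] L) = 2 := by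
    have hpair : ({AlgEquiv.refl, ιL} : Finset (L ≃ₐ[F] L)).card = 2 :=
      Finset.card_pair (Ne.symm hnontriv)
    refine le_antisymm ?_ ?_
    · calc Fintype.card (L ≃ₐ[F] L) = Fintype.card (L →ₐ[F] L) :=
            Fintype.card_congr (Algebra.IsAlgebraic.algEquivEquivAlgHom F L).toEquiv
        _ ≤ Module.finrank L (L →ₗ[F] L) := finrank_algHom F L
        _ = Module.finrank F L := Module.finrank_linearMap_self F L L
        _ = 2 := hquad
    · rw [← hpair]
      exact Finset.card_le_univ _
  have huniv : (Finset.univ : Finset (L ≃ₐ[F] L)) = {AlgEquiv.refl, ιL} := by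
    refine (Finset.eq_of_subset_of_card_le (Finset.subset_univ _) ?_).symm
    rw [Finset.card_univ, hcard, Finset.card_pair (Ne.symm hnontriv)]
  haveI : IsGalois F L := IsGalois.of_card_aut_eq_finrank F L (by rw [hquad, ← hcard]; convert Nat.card_eq_fintype_card)
  have htr : ∀ c : L, algebraMap F L (Algebra.trace F L c) = c + ιL c := by
    intro c
    rw [trace_eq_sum_automorphisms, huniv, Finset.sum_pair (Ne.symm hnontriv)]
    rfl
  obtain ⟨μ, hμ⟩ : ∃ μ : L, ιL μ ≠ μ := by
    by_contra h
    push_neg at h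
    exact hnontriv (AlgEquiv.ext h)
  obtain ⟨lam, hlam0, hlamconj⟩ : ∃ lam : L, lam ≠ 0 ∧ ιL lam = -lam := by
    refine ⟨μ - ιL μ, sub_ne_zero.mpr (Ne.symm hμ), ?_⟩
    rw [map_sub, hι μ, neg_sub]
  have hsp : ∀ c : L, ∃ s t : F, algebraMap F L s + algebraMap F L t * lam = c := by
    have hli : LinearIndependent F ![1, lam] := by
      rw [LinearIndependent.pair_iff]
      intro s t hst
      have hst' : algebraMap F L s + algebraMap F L t * lam = 0 := by
        rw [← hst, Algebra.smul_def, mul_one, Algebra.smul_def]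
      have hst2 : algebraMap F L s - algebraMap F L t * lam = 0 := by
        have h := congrArg ιL hst'
        rw [map_add, map_mul, AlgEquiv.commutes, AlgEquiv.commutes, hlamconj, map_zero] at h
        rw [← h]; ring
      have hs : algebraMap F L s = 0 := by
        have h2 : (2 : L) * algebraMap F L s = 0 := by
          rw [two_mul]
          calc algebraMap F L s + algebraMap F L s
              = (algebraMap F L s + algebraMap F L t * lam)
                + (algebraMap F L s - algebraMap F L t * lam) := by ring
            _ = 0 := by rw [hst', hst2, add_zero]
        rcases mul_eq_zero.mp h2 with h | h
        · exact absurd h h2L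
        · exact h
      have hs0 : s = 0 := by
        apply halg; rw [hs, map_zero]
      refine ⟨hs0, ?_⟩
      have ht : algebraMap F L t * lam = 0 := by
        rw [hs0, map_zero, zero_add] at hst'; exact hst'
      rcases mul_eq_zero.mp ht with h | h
      · apply halg; rw [h, map_zero]
      · exact absurd h hlam0
    have hspan := hli.span_eq_top_of_card_eq_finrank (by simp [hquad])
    intro c
    have hc : c ∈ Submodule.span F (Set.range ![1, lam]) := by rw [hspan]; trivial
    obtain ⟨coef, hcoef⟩ := (Submodule.mem_span_range_iff_exists_fun F).mp hc
    refine ⟨coef 0, coef 1, ?_⟩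
    rw [← hcoef, Fin.sum_univ_two]
    simp [Algebra.smul_def]
  -- the diagonal identification of `L ⊗[F] V` with `V × ^ιV`
  have hf_tmul : ∀ (c : L) (v : V),
      diagTensor ιL V (c ⊗ₜ[F] v) = (c • v, toConj ιL V (ιL c • v)) := fun c v => rfl
  have hrep : ∀ x : L ⊗[F] V, ∃ a b : V, x = 1 ⊗ₜ[F] a + lam ⊗ₜ[F] b := by
    intro x
    induction x using TensorProduct.induction_on with
    | zero => exact ⟨0, 0, by simp⟩
    | tmul c v =>
      obtain ⟨s, t, rfl⟩ := hsp c
      refine ⟨s • v, t • v, ?_⟩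
      have e1 : (algebraMap F L s) ⊗ₜ[F] v = (1 : L) ⊗ₜ[F] (s • v) := by
        rw [Algebra.algebraMap_eq_smul_one, TensorProduct.smul_tmul]
      have e2 : (algebraMap F L t * lam) ⊗ₜ[F] v = lam ⊗ₜ[F] (t • v) := by
        rw [← Algebra.smul_def, TensorProduct.smul_tmul]
      rw [TensorProduct.add_tmul, e1, e2]
    | add x y hx hy =>
      obtain ⟨a, b, rfl⟩ := hx
      obtain ⟨a', b', rfl⟩ := hy
      exact ⟨a + a', b + b', by rw [TensorProduct.tmul_add, TensorProduct.tmul_add]; abel⟩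
  have hcancel2 : ∀ a a' : V, a + a = a' + a' → a = a' := by
    intro a a' h
    have h2 : (2 : L) • a = (2 : L) • a' := by rw [two_smul, two_smul]; exact h
    have h3 := congrArg (fun z => (2 : L)⁻¹ • z) h2
    simpa [smul_smul, inv_mul_cancel₀ h2L] using h3
  have hcancellam : ∀ b b' : V, lam • b = lam • b' → b = b' := by
    intro b b' h
    have h3 := congrArg (fun z => lam⁻¹ • z) h
    simpa [smul_smul, inv_mul_cancel₀ hlam0] using h3
  have hinj : Function.Injective (diagTensor ιL V) := by
    intro x y hxy
    obtain ⟨a, b, rfl⟩ := hrep x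
    obtain ⟨a', b', rfl⟩ := hrep y
    rw [map_add, map_add, hf_tmul, hf_tmul, hf_tmul, hf_tmul] at hxy
    have h1 : a + lam • b = a' + lam • b' := by
      have h := congrArg Prod.fst hxy
      simpa using h
    have h2 : a + -(lam • b) = a' + -(lam • b') := by
      have h := congrArg (fun p : V × Conj ιL V => ofConj ιL V p.2) hxy
      simpa [hlamconj] using h
    have ha : a = a' := hcancel2 _ _ (by
      calc a + a = (a + lam • b) + (a + -(lam • b)) := by abel
        _ = (a' + lam • b') + (a' + -(lam • b')) := by rw [h1, h2]
        _ = a' + a' := by abel)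
    have hb : b = b' := hcancellam _ _ (hcancel2 _ _ (by
      calc lam • b + lam • b = (a + lam • b) - (a + -(lam • b)) := by abel
        _ = (a' + lam • b') - (a' + -(lam • b')) := by rw [h1, h2]
        _ = lam • b' + lam • b' := by abel))
    rw [ha, hb]
  have hι2 : ιL ((2:L)⁻¹) = (2:L)⁻¹ := by
    rw [map_inv₀, map_ofNat]
  have hhalf : ∀ w w' : V, ((2:L)⁻¹ • (w + w')) + ((2:L)⁻¹ • (w - w')) = w := by
    intro w w'
    rw [← smul_add]
    have h : (w + w') + (w - w') = (2:L) • w := by rw [two_smul]; abel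
    rw [h, smul_smul, inv_mul_cancel₀ h2L, one_smul]
  have hhalf' : ∀ w w' : V, ((2:L)⁻¹ • (w + w')) - ((2:L)⁻¹ • (w - w')) = w' := by
    intro w w'
    rw [← smul_sub]
    have h : (w + w') - (w - w') = (2:L) • w' := by rw [two_smul]; abel
    rw [h, smul_smul, inv_mul_cancel₀ h2L, one_smul]
  have hkey : ∀ w w' : V, ((2:L)⁻¹ * lam⁻¹) • (lam • w - lam • w') = (2:L)⁻¹ • (w - w') := by
    intro w w'
    rw [← smul_sub, smul_smul, mul_assoc, inv_mul_cancel₀ hlam0, mul_one]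
  have hsurj : Function.Surjective (diagTensor ιL V) := by
    rintro ⟨v, u⟩
    refine ⟨(2 : L)⁻¹ ⊗ₜ[F] (v + ofConj ιL V u)
      + ((2 : L)⁻¹ * lam⁻¹) ⊗ₜ[F] (lam • v - lam • ofConj ιL V u), ?_⟩
    rw [map_add, hf_tmul, hf_tmul]
    have hιc : ιL ((2:L)⁻¹ * lam⁻¹) = -((2:L)⁻¹ * lam⁻¹) := by
      rw [map_mul, hι2, map_inv₀, hlamconj, inv_neg, mul_neg]
    rw [hι2, hιc]
    simp only [Prod.mk_add_mk, Prod.mk.injEq]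
    constructor
    · rw [hkey, hhalf]
    · show toConj ιL V ((2:L)⁻¹ • (v + ofConj ιL V u))
        + toConj ιL V ((-((2:L)⁻¹ * lam⁻¹)) • (lam • v - lam • ofConj ιL V u)) = u
      rw [← toConj_add, neg_smul, hkey, ← sub_eq_add_neg, hhalf']
      exact toConj_ofConj ιL V u
  -- the quadratic forms agree
  have hQ : (ψ.prod (conjForm ιL V hι ψ)).comp (diagTensor ιL V)
      = (transferForm F L V ψ).baseChange L := by
    apply baseChange_ext
    intro m
    rw [QuadraticMap.comp_apply, QuadraticForm.baseChange_tmul]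
    rw [hf_tmul, map_one, one_smul]
    rw [QuadraticMap.prod_apply]
    show ψ m + ιL (ψ m) = Algebra.trace F L (ψ m) • ((1:L) * 1)
    rw [mul_one, Algebra.smul_def, mul_one, htr]
  let eLin : (L ⊗[F] V) ≃ₗ[L] V × Conj ιL V :=
    LinearEquiv.ofBijective (diagTensor ιL V) ⟨hinj, hsurj⟩
  let isom : QuadraticMap.IsometryEquiv ((transferForm F L V ψ).baseChange L)
      (ψ.prod (conjForm ιL V hι ψ)) :=
    { eLin with
      map_app' := fun m => by
        rw [← hQ, QuadraticMap.comp_apply]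
        rfl }
  let Θ : CliffordAlgebra ((transferForm F L V ψ).baseChange L) ≃ₐ[L]
      CliffordAlgebra (ψ.prod (conjForm ιL V hι ψ)) := CliffordAlgebra.equivOfIsometry isom
  let Θof : (L ⊗[F] CliffordAlgebra (transferForm F L V ψ)) →ₐ[L]
      CliffordAlgebra (ψ.prod (conjForm ιL V hι ψ)) :=
    Θ.toAlgHom.comp (CliffordAlgebra.ofBaseChange L (transferForm F L V ψ))
  let Ξ : CliffordAlgebra (transferForm F L V ψ) →ₐ[F]
      CliffordAlgebra (ψ.prod (conjForm ιL V hι ψ)) :=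
    (Θof.restrictScalars F).comp Algebra.TensorProduct.includeRight
  have hΞdef : ∀ x, Ξ x = Θof (1 ⊗ₜ[F] x) := fun x => rfl
  have hΘof_tmul : ∀ (c : L) (x : CliffordAlgebra (transferForm F L V ψ)),
      Θof (c ⊗ₜ[F] x) = c • Θof (1 ⊗ₜ[F] x) := by
    intro c x
    have h : (c ⊗ₜ[F] x : L ⊗[F] CliffordAlgebra (transferForm F L V ψ))
        = c • ((1 : L) ⊗ₜ[F] x) := by
      rw [TensorProduct.smul_tmul', smul_eq_mul, mul_one]
    rw [h, map_smul]
  have hΞι : ∀ v : V, Ξ (CliffordAlgebra.ι (transferForm F L V ψ) v)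
      = CliffordAlgebra.ι (ψ.prod (conjForm ιL V hι ψ)) (v, toConj ιL V v) := by
    intro v
    rw [hΞdef]
    show Θ (CliffordAlgebra.ofBaseChange L (transferForm F L V ψ)
      ((1:L) ⊗ₜ[F] CliffordAlgebra.ι (transferForm F L V ψ) v)) = _
    rw [CliffordAlgebra.ofBaseChange_tmul_ι]
    show CliffordAlgebra.map isom.toIsometry
      (CliffordAlgebra.ι ((transferForm F L V ψ).baseChange L) ((1:L) ⊗ₜ[F] v)) = _
    rw [CliffordAlgebra.map_apply_ι]
    congr 1
    show diagTensor ιL V ((1:L) ⊗ₜ[F] v) = _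
    rw [hf_tmul, map_one, one_smul]
  have hΞsmul : ∀ (a : F) (x : CliffordAlgebra (transferForm F L V ψ)),
      Ξ (a • x) = algebraMap F L a • Ξ x := by
    intro a x
    rw [map_smul, algebraMap_smul]
  have hIncInj : Function.Injective
      (Algebra.TensorProduct.includeRight (R := F) (A := L)
        (B := CliffordAlgebra (transferForm F L V ψ))) := by
    set C := CliffordAlgebra (transferForm F L V ψ) with hC
    let r : L ⊗[F] C →ₗ[F] C :=
      TensorProduct.lift (((2:F)⁻¹ • LinearMap.lsmul F C) ∘ₗ (Algebra.trace F L))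
    have htr1 : Algebra.trace F L 1 = (2 : F) := by
      have h := Algebra.trace_algebraMap (S := L) (1 : F)
      rw [map_one] at h
      rw [h, hquad]
      norm_num
    have hr : ∀ x : C, r ((1:L) ⊗ₜ[F] x) = x := by
      intro x
      show ((2:F)⁻¹ • LinearMap.lsmul F C) (Algebra.trace F L 1) x = x
      rw [htr1]
      show (2:F)⁻¹ • ((2:F) • x) = x
      rw [smul_smul, inv_mul_cancel₀ hF, one_smul]
    intro x y hxy
    have h := congrArg r hxy
    rwa [show (Algebra.TensorProduct.includeRight x : L ⊗[F] C) = (1:L) ⊗ₜ[F] x from rfl,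
      show (Algebra.TensorProduct.includeRight y : L ⊗[F] C) = (1:L) ⊗ₜ[F] y from rfl,
      hr, hr] at h
  have hΘofInj : Function.Injective Θof := by
    intro x y hxy
    have h := congrArg (CliffordAlgebra.toBaseChange L (transferForm F L V ψ))
      (congrArg Θ.symm hxy)
    simpa [Θof, AlgEquiv.symm_apply_apply,
      CliffordAlgebra.toBaseChange_ofBaseChange] using h
  have hΞinj : Function.Injective Ξ := by
    intro x y h
    exact hIncInj (hΘofInj h)
  refine ⟨?_, ?_, ?_⟩
  · -- fixed points of the switch are the diagonal
    intro p
    constructor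
    · intro h
      have h2 : toConj ιL V p.1 = p.2 := congrArg Prod.snd h
      exact ⟨p.1, by rw [h2]⟩
    · rintro ⟨v, rfl⟩
      rfl
  · -- the restriction is the transfer
    intro v
    rw [QuadraticMap.prod_apply]
    show ψ v + ιL (ψ v) = algebraMap F L (Algebra.trace F L (ψ v))
    rw [htr]
  · -- the Clifford algebra statement
    intro S hS1 hS2
    have hSalg : ∀ c : L,
        S (algebraMap L (CliffordAlgebra (ψ.prod (conjForm ιL V hι ψ))) c)
          = algebraMap L (CliffordAlgebra (ψ.prod (conjForm ιL V hι ψ))) (ιL c) := by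
      intro c
      rw [Algebra.algebraMap_eq_smul_one, Algebra.algebraMap_eq_smul_one, hS1, map_one]
    have hfix : ∀ x, S (Ξ x) = Ξ x := by
      intro x
      induction x using CliffordAlgebra.induction with
      | algebraMap r =>
        rw [AlgHom.commutes, IsScalarTower.algebraMap_apply F L
          (CliffordAlgebra (ψ.prod (conjForm ιL V hι ψ))), hSalg, AlgEquiv.commutes]
      | ι v =>
        rw [hΞι, hS2 ((v, toConj ιL V v) : V × Conj ιL V)]
        rfl
      | mul a b ha hb => rw [map_mul, map_mul, ha, hb]
      | add a b ha hb => rw [map_add, map_add, ha, hb]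
    have hdec : ∀ y : CliffordAlgebra (ψ.prod (conjForm ιL V hι ψ)),
        ∃ a b, y = Ξ a + lam • Ξ b := by
      have key : ∀ z : L ⊗[F] CliffordAlgebra (transferForm F L V ψ),
          ∃ a b, Θof z = Ξ a + lam • Ξ b := by
        intro z
        induction z using TensorProduct.induction_on with
        | zero => exact ⟨0, 0, by simp⟩
        | tmul c x =>
          obtain ⟨s, t, rfl⟩ := hsp c
          refine ⟨s • x, t • x, ?_⟩
          rw [hΘof_tmul, ← hΞdef, add_smul]
          congr 1
          · exact (hΞsmul s x).symm
          · rw [hΞsmul t x, mul_comm, mul_smul]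
        | add u w hu hw =>
          obtain ⟨a, b, h⟩ := hu
          obtain ⟨a', b', h'⟩ := hw
          refine ⟨a + a', b + b', ?_⟩
          rw [map_add, h, h', map_add, map_add, smul_add]
          abel
      intro y
      obtain ⟨a, b, h⟩ := key (CliffordAlgebra.toBaseChange L (transferForm F L V ψ) (Θ.symm y))
      refine ⟨a, b, ?_⟩
      rw [← h]
      show y = Θ (CliffordAlgebra.ofBaseChange L (transferForm F L V ψ)
        (CliffordAlgebra.toBaseChange L (transferForm F L V ψ) (Θ.symm y)))
      rw [CliffordAlgebra.ofBaseChange_toBaseChange, AlgEquiv.apply_symm_apply]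
    refine ⟨Ξ.toRingHom, ?_, hΞinj, ?_, ?_, ?_, ?_⟩
    · intro a x
      exact hΞsmul a x
    · intro y
      constructor
      · intro hy
        obtain ⟨a, b, rfl⟩ := hdec y
        have h1 : S (Ξ a + lam • Ξ b) = Ξ a + -(lam • Ξ b) := by
          rw [map_add, hfix, hS1, hfix, hlamconj, neg_smul]
        have h3 : lam • Ξ b = -(lam • Ξ b) := by
          have h := hy.symm.trans h1
          exact add_right_injective (Ξ a) h
        have h2 : lam • Ξ b + lam • Ξ b = 0 := add_eq_zero_iff_eq_neg.mpr h3
        have hb0 : Ξ b = 0 := by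
          have h4 : ((2:L) * lam) • Ξ b = 0 := by
            rw [mul_smul, two_smul]
            exact h2
          have h5 := congrArg (fun z => ((2:L) * lam)⁻¹ • z) h4
          simp only [smul_smul, inv_mul_cancel₀ (mul_ne_zero h2L hlam0), one_smul,
            smul_zero] at h5
          exact h5
        refine ⟨a, ?_⟩
        show Ξ a = Ξ a + lam • Ξ b
        rw [hb0, smul_zero, add_zero]
      · rintro ⟨x, rfl⟩
        exact hfix x
    · intro v
      exact hΞι v
    · -- grading
      have hzero : ∀ x (hx : x ∈ CliffordAlgebra.evenOdd (transferForm F L V ψ) 0),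
          Ξ x ∈ CliffordAlgebra.evenOdd (ψ.prod (conjForm ιL V hι ψ)) 0 := by
        intro x hx
        induction x, hx using CliffordAlgebra.even_induction with
        | algebraMap r =>
          rw [AlgHom.commutes, IsScalarTower.algebraMap_apply F L
            (CliffordAlgebra (ψ.prod (conjForm ιL V hι ψ)))]
          exact SetLike.algebraMap_mem_graded _ _
        | add x y hx hy ihx ihy =>
          rw [map_add]
          exact Submodule.add_mem _ ihx ihy
        | ι_mul_ι_mul m₁ m₂ x hx ih =>
          rw [map_mul, map_mul, hΞι, hΞι]
          exact zero_add (0 : ZMod 2) ▸ SetLike.mul_mem_graded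
            (CliffordAlgebra.ι_mul_ι_mem_evenOdd_zero _ _ _) ih
      have hone : ∀ x (hx : x ∈ CliffordAlgebra.evenOdd (transferForm F L V ψ) 1),
          Ξ x ∈ CliffordAlgebra.evenOdd (ψ.prod (conjForm ιL V hι ψ)) 1 := by
        intro x hx
        induction x, hx using CliffordAlgebra.odd_induction with
        | ι v =>
          rw [hΞι]
          exact CliffordAlgebra.ι_mem_evenOdd_one _ _
        | add x y hx hy ihx ihy =>
          rw [map_add]
          exact Submodule.add_mem _ ihx ihy
        | ι_mul_ι_mul m₁ m₂ x hx ih =>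
          rw [map_mul, map_mul, hΞι, hΞι]
          exact zero_add (1 : ZMod 2) ▸ SetLike.mul_mem_graded
            (CliffordAlgebra.ι_mul_ι_mem_evenOdd_zero _ _ _) ih
      have hcases : ∀ j : ZMod 2, j = 0 ∨ j = 1 := by decide
      intro i x hx
      rcases hcases i with rfl | rfl
      · exact hzero x hx
      · exact hone x hx
    · -- reverse
      intro x
      show Ξ (CliffordAlgebra.reverse x) = CliffordAlgebra.reverse (Ξ x)
      induction x using CliffordAlgebra.induction with
      | algebraMap r =>
        rw [CliffordAlgebra.reverse.commutes, AlgHom.commutes,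
          IsScalarTower.algebraMap_apply F L
            (CliffordAlgebra (ψ.prod (conjForm ιL V hι ψ))),
          CliffordAlgebra.reverse.commutes]
      | ι v =>
        rw [CliffordAlgebra.reverse_ι, hΞι, CliffordAlgebra.reverse_ι]
      | mul a b ha hb =>
        rw [CliffordAlgebra.reverse.map_mul, map_mul, ha, hb, map_mul,
          CliffordAlgebra.reverse.map_mul]
      | add a b ha hb =>
        simp only [map_add, ha, hb]
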